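/- The space ΛBV^{(p)} of functions of bounded p-Λ-variation on [0,1], equipped with the norm ‖f‖ = |f(0)| + V(f), is a Banach space. -/

import Mathlib

open MeasureTheory

/-- The set of candidate sums defining the p-Λ-variation of `f` on `[0,1]`:
values `(∑ᵢ |f(bᵢ) - f(aᵢ)|^p / λᵢ)^{1/p}` over finite families of
nonoverlapping subintervals `[aᵢ, bᵢ] ⊆ [0,1]`. -/
def varSet (p : ℝ) (Λ : ℕ → ℝ) (f : ℝ → ℝ) : Set ℝ :=
  {v : ℝ | ∃ (n : ℕ) (a b : Fin n → ℝ),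
    (∀ i, 0 ≤ a i ∧ a i ≤ b i ∧ b i ≤ 1) ∧
    (∀ i j, i ≠ j → b i ≤ a j ∨ b j ≤ a i) ∧
    v = (∑ i, |f (b i) - f (a i)| ^ p / Λ (i : ℕ)) ^ (1 / p)}

/-- The p-Λ-variation `V(f)` of `f` on `[0,1]`. -/
noncomputable def pVar (p : ℝ) (Λ : ℕ → ℝ) (f : ℝ → ℝ) : ℝ :=
  sSup (varSet p Λ f)

/-- `f` belongs to the Waterman–Shiba class `ΛBV^{(p)}` on `[0,1]`. -/
def MemWS (p : ℝ) (Λ : ℕ → ℝ) (f : ℝ → ℝ) : Prop :=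
  BddAbove (varSet p Λ f)

section Aux

variable {p : ℝ} {Λ : ℕ → ℝ}

lemma zero_mem_varSet (hp : 1 ≤ p) (f : ℝ → ℝ) : (0 : ℝ) ∈ varSet p Λ f := by
  have hp0 : (0:ℝ) < p := lt_of_lt_of_le one_pos hp
  refine ⟨0, fun i => i.elim0, fun i => i.elim0, fun i => i.elim0, fun i => i.elim0, ?_⟩
  rw [Finset.univ_eq_empty, Finset.sum_empty, Real.zero_rpow (by positivity)]

lemma varSet_neg (p : ℝ) (Λ : ℕ → ℝ) (F : ℝ → ℝ) :
    varSet p Λ (fun x => -F x) = varSet p Λ F := by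
  have habs : ∀ x y : ℝ, |(-x) - (-y)| = |x - y| := fun x y => by
    rw [neg_sub_neg, abs_sub_comm]
  ext v
  constructor <;> rintro ⟨n, a, b, h1, h2, rfl⟩ <;>
    exact ⟨n, a, b, h1, h2, by simp only [habs]⟩

lemma varSet_add (hp : 1 ≤ p) (hΛ : ∀ i, 0 < Λ i) {F G : ℝ → ℝ} {v : ℝ}
    (hv : v ∈ varSet p Λ (fun x => F x + G x)) :
    ∃ vF ∈ varSet p Λ F, ∃ vG ∈ varSet p Λ G, v ≤ vF + vG := by
  obtain ⟨n, a, b, h1, h2, rfl⟩ := hv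
  refine ⟨_, ⟨n, a, b, h1, h2, rfl⟩, _, ⟨n, a, b, h1, h2, rfl⟩, ?_⟩
  have hp0 : (0:ℝ) < p := lt_of_lt_of_le one_pos hp
  set c : Fin n → ℝ := fun i => Λ (i : ℕ) ^ (1 / p) with hc
  have hcpos : ∀ i, 0 < c i := fun i => Real.rpow_pos_of_pos (hΛ _) _
  have key : ∀ u : Fin n → ℝ,
      (∑ i, |u i| ^ p / Λ (i : ℕ)) = ∑ i, |u i / c i| ^ p := by
    intro u
    refine Finset.sum_congr rfl fun i _ => ?_
    rw [abs_div, abs_of_pos (hcpos i), Real.div_rpow (abs_nonneg _) (hcpos i).le, hc, one_div,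
      Real.rpow_inv_rpow (hΛ _).le (ne_of_gt hp0)]
  calc ((∑ i, |F (b i) + G (b i) - (F (a i) + G (a i))| ^ p / Λ (i : ℕ)) : ℝ) ^ (1 / p)
      = (∑ i, |(F (b i) - F (a i)) / c i + (G (b i) - G (a i)) / c i| ^ p) ^ (1 / p) := by
        rw [key (fun i => F (b i) + G (b i) - (F (a i) + G (a i)))]
        congr 1
        refine Finset.sum_congr rfl fun i _ => ?_
        rw [← add_div]
        have : F (b i) + G (b i) - (F (a i) + G (a i))
            = F (b i) - F (a i) + (G (b i) - G (a i)) := by ring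
        rw [this]
    _ ≤ (∑ i, |(F (b i) - F (a i)) / c i| ^ p) ^ (1 / p)
        + (∑ i, |(G (b i) - G (a i)) / c i| ^ p) ^ (1 / p) := Real.Lp_add_le _ _ _ hp
    _ = (∑ i, |F (b i) - F (a i)| ^ p / Λ (i : ℕ)) ^ (1 / p)
        + (∑ i, |G (b i) - G (a i)| ^ p / Λ (i : ℕ)) ^ (1 / p) := by
        rw [key (fun i => F (b i) - F (a i)), key (fun i => G (b i) - G (a i))]

lemma varSet_sub (hp : 1 ≤ p) (hΛ : ∀ i, 0 < Λ i) {F G : ℝ → ℝ} {v : ℝ}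
    (hv : v ∈ varSet p Λ (fun x => F x - G x)) :
    ∃ vF ∈ varSet p Λ F, ∃ vG ∈ varSet p Λ G, v ≤ vF + vG := by
  rw [show (fun x => F x - G x) = fun x => F x + (-G x) from funext fun x => by ring] at hv
  obtain ⟨vF, hF, vG, hG, hle⟩ := varSet_add hp hΛ hv
  rw [varSet_neg] at hG
  exact ⟨vF, hF, vG, hG, hle⟩

lemma single_mem_varSet (f : ℝ → ℝ) {x : ℝ} (hx0 : 0 ≤ x) (hx1 : x ≤ 1) :
    (|f x - f 0| ^ p / Λ 0) ^ (1 / p) ∈ varSet p Λ f := by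
  refine ⟨1, fun _ => 0, fun _ => x, fun i => ⟨le_refl 0, hx0, hx1⟩,
    fun i j hij => absurd (Subsingleton.elim i j) hij, ?_⟩
  simp

lemma abs_le_pVar (hp : 1 ≤ p) (hΛ : ∀ i, 0 < Λ i) {f : ℝ → ℝ} (hf : MemWS p Λ f)
    {x : ℝ} (hx0 : 0 ≤ x) (hx1 : x ≤ 1) :
    |f x - f 0| ≤ Λ 0 ^ (1 / p) * pVar p Λ f := by
  have hp0 : (0:ℝ) < p := lt_of_lt_of_le one_pos hp
  have h1 : (|f x - f 0| ^ p / Λ 0) ^ (1 / p) ≤ pVar p Λ f :=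
    le_csSup hf (single_mem_varSet f hx0 hx1)
  have h2 : Λ 0 ^ (1 / p) * (|f x - f 0| ^ p / Λ 0) ^ (1 / p) = |f x - f 0| := by
    rw [← Real.mul_rpow (hΛ 0).le
        (div_nonneg (Real.rpow_nonneg (abs_nonneg _) _) (hΛ 0).le),
      mul_comm (Λ 0), div_mul_cancel₀ _ (ne_of_gt (hΛ 0)), one_div,
      Real.rpow_rpow_inv (abs_nonneg _) (ne_of_gt hp0)]
  calc |f x - f 0| = Λ 0 ^ (1 / p) * (|f x - f 0| ^ p / Λ 0) ^ (1 / p) := h2.symm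
    _ ≤ Λ 0 ^ (1 / p) * pVar p Λ f :=
        mul_le_mul_of_nonneg_left h1 (Real.rpow_nonneg (hΛ 0).le _)

end Aux

/-- completeness of `ΛBV^{(p)}` with the norm `‖f‖ = |f(0)| + V(f)`:
every Cauchy sequence in `ΛBV^{(p)}` converges in this norm to a function of the class. -/
theorem stmt15 (p : ℝ) (hp : 1 ≤ p)
    (Λ : ℕ → ℝ) (hΛpos : ∀ i, 0 < Λ i) (hΛmono : Monotone Λ)
    (hΛdiv : Filter.Tendsto (fun n => ∑ i ∈ Finset.range n, 1 / Λ i) Filter.atTop Filter.atTop)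
    (f : ℕ → ℝ → ℝ) (hf : ∀ n, MemWS p Λ (f n))
    (hcauchy : ∀ ε : ℝ, 0 < ε → ∃ N : ℕ, ∀ m n : ℕ, N ≤ m → N ≤ n →
      |f m 0 - f n 0| + pVar p Λ (fun x => f m x - f n x) < ε) :
    ∃ g : ℝ → ℝ, MemWS p Λ g ∧
      ∀ ε : ℝ, 0 < ε → ∃ N : ℕ, ∀ n : ℕ, N ≤ n →
        |f n 0 - g 0| + pVar p Λ (fun x => f n x - g x) < ε := by
  have hp0 : (0:ℝ) < p := lt_of_lt_of_le one_pos hp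
  -- differences of terms are in the class
  have hMemSub : ∀ m n, MemWS p Λ (fun x => f m x - f n x) := by
    intro m n
    obtain ⟨Mm, hMm⟩ := hf m
    obtain ⟨Mn, hMn⟩ := hf n
    refine ⟨Mm + Mn, fun v hv => ?_⟩
    obtain ⟨vF, hF, vG, hG, h⟩ := varSet_sub hp hΛpos hv
    exact h.trans (add_le_add (hMm hF) (hMn hG))
  have hpVarSubNonneg : ∀ m n, 0 ≤ pVar p Λ (fun x => f m x - f n x) := fun m n =>
    le_csSup (hMemSub m n) (zero_mem_varSet hp _)
  -- pointwise Cauchy on [0,1]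
  have hCauchyPt : ∀ x : ℝ, 0 ≤ x → x ≤ 1 → CauchySeq (fun n => f n x) := by
    intro x hx0 hx1
    rw [Metric.cauchySeq_iff]
    intro ε hε
    have hL : (0:ℝ) ≤ Λ 0 ^ (1 / p) := Real.rpow_nonneg (hΛpos 0).le _
    have hC : (0:ℝ) < 1 + Λ 0 ^ (1 / p) := by linarith
    obtain ⟨N, hN⟩ := hcauchy (ε / (1 + Λ 0 ^ (1 / p))) (by positivity)
    refine ⟨N, fun m hm n hn => ?_⟩
    have h1 := hN m n hm hn
    have h2 : |f m x - f n x - (f m 0 - f n 0)|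
        ≤ Λ 0 ^ (1 / p) * pVar p Λ (fun y => f m y - f n y) :=
      abs_le_pVar hp hΛpos (hMemSub m n) hx0 hx1
    have h3 := hpVarSubNonneg m n
    have h4 : (0:ℝ) ≤ |f m 0 - f n 0| := abs_nonneg _
    rw [Real.dist_eq]
    have h5 : |f m x - f n x| ≤ |f m 0 - f n 0| + |f m x - f n x - (f m 0 - f n 0)| := by
      have := abs_add_le (f m 0 - f n 0) (f m x - f n x - (f m 0 - f n 0))
      simpa using this
    have h6 : |f m 0 - f n 0| + pVar p Λ (fun y => f m y - f n y)
        < ε / (1 + Λ 0 ^ (1 / p)) := h1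
    have h7 : ε / (1 + Λ 0 ^ (1 / p)) * (1 + Λ 0 ^ (1 / p)) = ε :=
      div_mul_cancel₀ ε (ne_of_gt hC)
    nlinarith [h7, mul_lt_mul_of_pos_right h6 hC, mul_nonneg hL h3, mul_nonneg hL h4]
  -- pointwise limit
  have hlim : ∀ x : ℝ, ∃ L : ℝ, (0 ≤ x ∧ x ≤ 1) →
      Filter.Tendsto (fun n => f n x) Filter.atTop (nhds L) := by
    intro x
    by_cases hx : 0 ≤ x ∧ x ≤ 1
    · obtain ⟨L, hL⟩ := cauchySeq_tendsto_of_complete (hCauchyPt x hx.1 hx.2)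
      exact ⟨L, fun _ => hL⟩
    · exact ⟨0, fun h => absurd h hx⟩
  choose g hg using hlim
  -- the main estimate
  have main : ∀ ε : ℝ, 0 < ε → ∃ N, ∀ n, N ≤ n →
      ∀ v ∈ varSet p Λ (fun x => f n x - g x), |f n 0 - g 0| + v ≤ ε := by
    intro ε hε
    obtain ⟨N, hN⟩ := hcauchy ε hε
    refine ⟨N, fun n hn v hv => ?_⟩
    obtain ⟨k, a, b, h1, h2, rfl⟩ := hv
    have hterm : ∀ x : ℝ, 0 ≤ x → x ≤ 1 →
        Filter.Tendsto (fun m => f n x - f m x) Filter.atTop (nhds (f n x - g x)) :=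
      fun x hx0 hx1 => tendsto_const_nhds.sub (hg x ⟨hx0, hx1⟩)
    have hsum : Filter.Tendsto
        (fun m => |f n 0 - f m 0|
          + (∑ i, |(f n (b i) - f m (b i)) - (f n (a i) - f m (a i))| ^ p / Λ (i : ℕ)) ^ (1 / p))
        Filter.atTop
        (nhds (|f n 0 - g 0|
          + (∑ i, |(f n (b i) - g (b i)) - (f n (a i) - g (a i))| ^ p / Λ (i : ℕ)) ^ (1 / p))) := by
      refine Filter.Tendsto.add ((hterm 0 le_rfl zero_le_one).abs) ?_
      refine Filter.Tendsto.rpow_const ?_ (Or.inr (by positivity))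
      refine tendsto_finset_sum _ fun i _ => ?_
      have hbi := h1 i
      have hti : Filter.Tendsto
          (fun m => (f n (b i) - f m (b i)) - (f n (a i) - f m (a i))) Filter.atTop
          (nhds ((f n (b i) - g (b i)) - (f n (a i) - g (a i)))) :=
        (hterm (b i) (hbi.1.trans hbi.2.1) hbi.2.2).sub
          (hterm (a i) hbi.1 (hbi.2.1.trans hbi.2.2))
      exact (hti.abs.rpow_const (Or.inr hp0.le)).div_const _
    refine le_of_tendsto hsum ?_
    rw [Filter.eventually_atTop]
    refine ⟨N, fun m hm => ?_⟩
    have hmem : (∑ i, |(f n (b i) - f m (b i)) - (f n (a i) - f m (a i))| ^ p / Λ (i : ℕ)) ^ (1 / p)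
        ∈ varSet p Λ (fun x => f n x - f m x) := ⟨k, a, b, h1, h2, rfl⟩
    have hle : (∑ i, |(f n (b i) - f m (b i)) - (f n (a i) - f m (a i))| ^ p / Λ (i : ℕ)) ^ (1 / p)
        ≤ pVar p Λ (fun x => f n x - f m x) := le_csSup (hMemSub n m) hmem
    have := hN n m hn hm
    linarith
  -- boundedness of variation sets of f n - g
  obtain ⟨N₀, hN₀⟩ := main 1 one_pos
  -- g belongs to the class
  have hMemg : MemWS p Λ g := by
    obtain ⟨M, hM⟩ := hf N₀
    have hB : ∀ v ∈ varSet p Λ (fun x => f N₀ x - g x), v ≤ 1 := by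
      intro v hv
      have := hN₀ N₀ le_rfl v hv
      have h0 : (0:ℝ) ≤ |f N₀ 0 - g 0| := abs_nonneg _
      linarith
    refine ⟨M + 1, fun v hv => ?_⟩
    rw [show g = (fun x => f N₀ x - (f N₀ x - g x)) from funext fun x => by ring] at hv
    obtain ⟨vF, hF, vG, hG, h⟩ := varSet_sub hp hΛpos hv
    exact h.trans (add_le_add (hM hF) (hB vG hG))
  refine ⟨g, hMemg, fun ε hε => ?_⟩
  obtain ⟨N, hN⟩ := main (ε / 2) (by positivity)
  refine ⟨N, fun n hn => ?_⟩
  have hle : pVar p Λ (fun x => f n x - g x) ≤ ε / 2 - |f n 0 - g 0| := by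
    refine csSup_le (Set.nonempty_of_mem (zero_mem_varSet hp _)) fun v hv => ?_
    have := hN n hn v hv
    linarith
  linarith
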